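/- The number of pairs (λ, μ) ∈ ℤ_{≥0}^n × ℤ_{≥0}^n with |λ| = l, |μ| = m equals ∑_{k=0}^{min(l,m)} (l+m−2k+n−1)(l−k+n−2)!(m−k+n−2)! / ((l−k)!(m−k)!(n−1)!(n−2)!) for n ≥ 2, reflecting the decomposition Z̃_n(l,m) = ⊕_{k=0}^{min(l,m)} H̃_n(l−k, m−k). -/

import Mathlib

/-- `d_n(a,b) = (a+b+n−1)(a+n−2)!(b+n−2)!/(a! b! (n−1)! (n−2)!)`, the dimension of
`H̃_n(a,b)`, as a rational number. -/
noncomputable def dDim (n a b : ℕ) : ℚ :=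
  ((a + b + n - 1) * (a + n - 2).factorial * (b + n - 2).factorial : ℕ) /
    ((a.factorial * b.factorial * (n - 1).factorial * (n - 2).factorial : ℕ) : ℚ)


lemma card_sum_fin (n l : ℕ) (hn : 1 ≤ n) :
    Nat.card {f : Fin n → ℕ // ∑ i, f i = l} = (l + n - 1).choose (n - 1) := by
  have e : {f : Fin n → ℕ // ∑ i, f i = l} ≃ Sym (Fin n) l :=
    Equiv.subtypeEquiv (Finsupp.equivFunOnFinite.symm.trans Multiset.toFinsupp.symm.toEquiv)
      (by
        intro f
        simp [Finsupp.card_toMultiset, Finsupp.sum_fintype])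
  rw [Nat.card_congr e, Nat.card_eq_fintype_card, Sym.card_sym_eq_choose]
  simp only [Fintype.card_fin]
  rw [add_comm n l, show n - 1 = (l + n - 1) - l by omega, Nat.choose_symm (by omega)]

lemma dDim_zero_left (n' m : ℕ) :
    dDim (n' + 2) 0 m = ((m + n' + 1).choose (n' + 1) : ℚ) := by
  have h1 : 0 + m + (n' + 2) - 1 = m + n' + 1 := by omega
  have h2 : 0 + (n' + 2) - 2 = n' := by omega
  have h3 : m + (n' + 2) - 2 = m + n' := by omega
  have h4 : n' + 2 - 1 = n' + 1 := by omega
  have h5 : n' + 2 - 2 = n' := by omega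
  rw [dDim, h1, h2, h3, h4, h5,
    Nat.cast_choose ℚ (show n' + 1 ≤ m + n' + 1 by omega)]
  have h6 : m + n' + 1 - (n' + 1) = m := by omega
  rw [h6]
  have hfac : (m + n' + 1).factorial = (m + n' + 1) * (m + n').factorial := rfl
  rw [hfac]
  push_cast
  have f1 : (0:ℚ) < (n' + 1).factorial := by positivity
  have f2 : (0:ℚ) < m.factorial := by positivity
  have f3 : (0:ℚ) < n'.factorial := by positivity
  field_simp
  ring_nf

lemma dDim_comm (n a b : ℕ) : dDim n a b = dDim n b a := by
  rw [dDim, dDim]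
  congr 1
  · push_cast; ring_nf
  · push_cast; ring

lemma dDim_key (n' a b : ℕ) :
    dDim (n' + 2) (a + 1) (b + 1) =
      ((a + n' + 2).choose (n' + 1) : ℚ) * ((b + n' + 2).choose (n' + 1)) -
        ((a + n' + 1).choose (n' + 1) : ℚ) * ((b + n' + 1).choose (n' + 1)) := by
  have h1 : a + 1 + (b + 1) + (n' + 2) - 1 = a + b + n' + 3 := by omega
  have h2 : a + 1 + (n' + 2) - 2 = a + n' + 1 := by omega
  have h3 : b + 1 + (n' + 2) - 2 = b + n' + 1 := by omega
  have h4 : n' + 2 - 1 = n' + 1 := by omega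
  have h5 : n' + 2 - 2 = n' := by omega
  rw [dDim, h1, h2, h3, h4, h5,
    Nat.cast_choose ℚ (show n' + 1 ≤ a + n' + 2 by omega),
    Nat.cast_choose ℚ (show n' + 1 ≤ b + n' + 2 by omega),
    Nat.cast_choose ℚ (show n' + 1 ≤ a + n' + 1 by omega),
    Nat.cast_choose ℚ (show n' + 1 ≤ b + n' + 1 by omega)]
  have e1 : a + n' + 2 - (n' + 1) = a + 1 := by omega
  have e2 : b + n' + 2 - (n' + 1) = b + 1 := by omega
  have e3 : a + n' + 1 - (n' + 1) = a := by omega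
  have e4 : b + n' + 1 - (n' + 1) = b := by omega
  rw [e1, e2, e3, e4]
  have fa : (a + n' + 2).factorial = (a + n' + 2) * (a + n' + 1).factorial := rfl
  have fb : (b + n' + 2).factorial = (b + n' + 2) * (b + n' + 1).factorial := rfl
  have fa' : (a + 1).factorial = (a + 1) * a.factorial := rfl
  have fb' : (b + 1).factorial = (b + 1) * b.factorial := rfl
  have fn : (n' + 1).factorial = (n' + 1) * n'.factorial := rfl
  rw [fa, fb, fa', fb', fn]
  push_cast
  have p1 : (0:ℚ) < a.factorial := by positivity
  have p2 : (0:ℚ) < b.factorial := by positivity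
  have p3 : (0:ℚ) < n'.factorial := by positivity
  have p4 : (0:ℚ) < (a + n' + 1).factorial := by positivity
  have p5 : (0:ℚ) < (b + n' + 1).factorial := by positivity
  field_simp
  ring_nf

lemma sum_dDim (n' : ℕ) : ∀ l m : ℕ,
    ∑ k ∈ Finset.range (min l m + 1), dDim (n' + 2) (l - k) (m - k) =
      ((l + n' + 1).choose (n' + 1) : ℚ) * ((m + n' + 1).choose (n' + 1)) := by
  intro l
  induction l with
  | zero =>
    intro m
    simp [dDim_zero_left]
  | succ l ih =>
    intro m
    cases m with
    | zero =>
      simp [dDim_comm, dDim_zero_left]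
    | succ m =>
      have hmin : min (l + 1) (m + 1) + 1 = (min l m + 1) + 1 := by omega
      rw [hmin, Finset.sum_range_succ']
      simp only [Nat.succ_sub_succ]
      rw [ih m, Nat.sub_zero, Nat.sub_zero, dDim_key]
      have e1 : l + 1 + n' + 1 = l + n' + 2 := by omega
      have e2 : m + 1 + n' + 1 = m + n' + 2 := by omega
      rw [e1, e2]
      ring

/-- The number of pairs `(λ, μ) ∈ ℤ_{≥0}^n × ℤ_{≥0}^n` with `|λ| = l`, `|μ| = m` equals
`∑_{k=0}^{min(l,m)} d_n(l−k, m−k)` for `n ≥ 2`, reflecting the decomposition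
`Z̃_n(l,m) = ⊕_{k=0}^{min(l,m)} H̃_n(l−k, m−k)`. -/
theorem card_pairs_eq_sum_dims (n l m : ℕ) (hn : 2 ≤ n) :
    (Nat.card {p : (Fin n → ℕ) × (Fin n → ℕ) //
        (∑ i, p.1 i) = l ∧ (∑ i, p.2 i) = m} : ℚ) =
      ∑ k ∈ Finset.range (min l m + 1), dDim n (l - k) (m - k) := by
  obtain ⟨n', rfl⟩ : ∃ n', n = n' + 2 := ⟨n - 2, by omega⟩
  rw [Nat.card_congr (Equiv.subtypeProdEquivProd (p := fun f : Fin (n' + 2) → ℕ => ∑ i, f i = l) (q := fun f : Fin (n' + 2) → ℕ => ∑ i, f i = m)), Nat.card_prod,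
    card_sum_fin _ _ (by omega), card_sum_fin _ _ (by omega), sum_dDim]
  have e1 : l + (n' + 2) - 1 = l + n' + 1 := by omega
  have e2 : m + (n' + 2) - 1 = m + n' + 1 := by omega
  have e3 : n' + 2 - 1 = n' + 1 := by omega
  rw [e1, e2, e3]
  push_cast
  ring
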